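/- Let Σ_I = Σ_O = {a, b} and L_1 = { (α, β) : α ≠ (ab)^ω }. Then Player I has an omnipotent lookahead-counting strategy for L_1 (namely τ(x, n) = (ab)^ω if n is even and (ba)^ω if n is odd), but Player I has no omnipotent output-tracking strategy for L_1: for every function τ : Σ_O^* → Σ_I^ω there exists a delay function f and a play of Γ_f(L_1) consistent with τ whose outcome lies in L_1. -/

import Mathlib

open scoped Classical MeasureTheory

section DelayGames

variable {I O A B : Type}

/-- `shiftSeq f β = ▷^{f 0 - 1} β 0 ▷^{f 1 - 1} β 1 ⋯`, where the skip symbol `▷`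
is modeled by `none` and a letter `b ∈ Σ_O` by `some b`. -/
noncomputable def shiftSeq (f : ℕ → ℕ) (β : ℕ → O) : ℕ → Option O := fun n =>
  if h : ∃ i, (∑ j ∈ Finset.range (i + 1), f j) = n + 1 then some (β (Nat.find h))
  else none

/-- `shift_f(L) = { (α, shift_f(β)) : (α, β) ∈ L }`. -/
def shiftLang (f : ℕ → ℕ) (L : Set ((ℕ → I) × (ℕ → O))) :
    Set ((ℕ → I) × (ℕ → Option O)) :=
  {p | ∃ β : ℕ → O, (p.1, β) ∈ L ∧ p.2 = shiftSeq f β}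

/-- The morphism `h` erasing the skip symbol, applied to an infinite word
(meaningful when the word has infinitely many non-skip letters). -/
noncomputable def eraseSkips [Inhabited O] (β : ℕ → Option O) : ℕ → O := fun n =>
  (β (Nat.nth (fun k => (β k).isSome) n)).getD default

/-- `skip(L) = ⋃_f shift_f(L) = { (α,β) : β has infinitely many non-▷ letters and (α, h β) ∈ L }`. -/
def skipLang [Inhabited O] (L : Set ((ℕ → I) × (ℕ → O))) :
    Set ((ℕ → I) × (ℕ → Option O)) :=
  {p | {k | (p.2 k).isSome}.Infinite ∧ (p.1, eraseSkips p.2) ∈ L}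

/-- A play of a Gale-Stewart game is consistent with the Player O strategy `σ`. -/
def gsConsO (σ : List A → B) (α : ℕ → A) (β : ℕ → B) : Prop :=
  ∀ i, β i = σ (List.ofFn fun j : Fin (i + 1) => α j)

/-- A play of a Gale-Stewart game is consistent with the Player I strategy `τ`. -/
def gsConsI (τ : List B → A) (α : ℕ → A) (β : ℕ → B) : Prop :=
  ∀ i, α i = τ (List.ofFn fun j : Fin i => β j)

/-- `σ` is a winning strategy for Player O in the Gale-Stewart game with winning condition `W`. -/
def gsWinO (W : Set ((ℕ → A) × (ℕ → B))) (σ : List A → B) : Prop :=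
  ∀ α β, gsConsO σ α β → (α, β) ∈ W

/-- `τ` is a winning strategy for Player I in the Gale-Stewart game with winning condition `W`. -/
def gsWinI (W : Set ((ℕ → A) × (ℕ → B))) (τ : List B → A) : Prop :=
  ∀ α β, gsConsI τ α β → (α, β) ∉ W

/-- The infinite word `u 0 · u 1 · u 2 ⋯` built by Player I in a delay game
(well-defined at position `n` as soon as the first `n+1` blocks have more than `n` letters). -/
def outcomeI [Inhabited I] (u : ℕ → List I) : ℕ → I := fun n =>
  ((List.ofFn fun j : Fin (n + 1) => u j).flatten).getD n default

/-- The word `v 0 ⋯ v (i-1)` of the first `i` letters of `v`. -/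
def prefixW (v : ℕ → O) (i : ℕ) : List O := List.ofFn fun j : Fin i => v j

/-- The concatenation `u 0 · u 1 ⋯ u i` of Player I's moves up to round `i`. -/
def inputsUpTo (u : ℕ → List I) (i : ℕ) : List I :=
  (List.ofFn fun j : Fin (i + 1) => u j).flatten

/-- `τ : Σ_O^* → Σ_I^*` is a (syntactically valid) Player I strategy for the
delay game `Γ_f(L)`: it answers with `f i` letters in round `i`. -/
def delayStratI (f : ℕ → ℕ) (τ : List O → List I) : Prop :=
  ∀ w : List O, (τ w).length = f w.length

/-- `τ` is winning for Player I in the delay game `Γ_f(L)`. -/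
def delayWinI [Inhabited I] (f : ℕ → ℕ) (L : Set ((ℕ → I) × (ℕ → O)))
    (τ : List O → List I) : Prop :=
  ∀ (u : ℕ → List I) (v : ℕ → O), (∀ i, (u i).length = f i) →
    (∀ i, u i = τ (prefixW v i)) → (outcomeI u, v) ∉ L

/-- `σ : Σ_I^* → Σ_O` is winning for Player O in the delay game `Γ_f(L)`. -/
def delayWinO [Inhabited I] (f : ℕ → ℕ) (L : Set ((ℕ → I) × (ℕ → O)))
    (σ : List I → O) : Prop :=
  ∀ (u : ℕ → List I) (v : ℕ → O), (∀ i, (u i).length = f i) →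
    (∀ i, v i = σ (inputsUpTo u i)) → (outcomeI u, v) ∈ L

/-- A round-counting strategy `σ : Σ_I^* × ℕ → Σ_O` is winning for Player O in `Γ_f(L)`:
in round `i` Player O plays `σ (u 0 ⋯ u i) i`. -/
def rcWinO [Inhabited I] (f : ℕ → ℕ) (L : Set ((ℕ → I) × (ℕ → O)))
    (σ : List I → ℕ → O) : Prop :=
  ∀ (u : ℕ → List I) (v : ℕ → O), (∀ i, (u i).length = f i) →
    (∀ i, v i = σ (inputsUpTo u i) i) → (outcomeI u, v) ∈ L

/-- An output-tracking strategy `τ : Σ_O^* → Σ_I^ω` is winning for Player I in `Γ_f(L)`: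
in round `i` Player I plays the length-`f i` prefix of `τ (v 0 ⋯ v (i-1))`. -/
def otWinI [Inhabited I] (f : ℕ → ℕ) (L : Set ((ℕ → I) × (ℕ → O)))
    (τ : List O → ℕ → I) : Prop :=
  ∀ (u : ℕ → List I) (v : ℕ → O),
    (∀ i, u i = List.ofFn fun j : Fin (f i) => τ (prefixW v i) j) →
    (outcomeI u, v) ∉ L

/-- A lookahead-counting strategy `τ : Σ_O^* × ℕ → Σ_I^ω` is winning for Player I in `Γ_f(L)`:
in round `i` Player I plays the length-`f i` prefix of `τ (v 0 ⋯ v (i-1), Σ_{j<i} f j)`. -/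
def lcWinI [Inhabited I] (f : ℕ → ℕ) (L : Set ((ℕ → I) × (ℕ → O)))
    (τ : List O → ℕ → ℕ → I) : Prop :=
  ∀ (u : ℕ → List I) (v : ℕ → O),
    (∀ i, u i = List.ofFn fun j : Fin (f i) =>
      τ (prefixW v i) (∑ k ∈ Finset.range i, f k) j) →
    (outcomeI u, v) ∉ L

/-- A history-tracking strategy `τ : Σ_O^* × (ℕ_{>0})^* → Σ_I^ω` is winning for Player I
in `Γ_f(L)`: in round `i` Player I plays the length-`f i` prefix of
`τ (v 0 ⋯ v (i-1), f 0 ⋯ f (i-1))`. -/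
def htWinI [Inhabited I] (f : ℕ → ℕ) (L : Set ((ℕ → I) × (ℕ → O)))
    (τ : List O → List ℕ → ℕ → I) : Prop :=
  ∀ (u : ℕ → List I) (v : ℕ → O),
    (∀ i, u i = List.ofFn fun j : Fin (f i) => τ (prefixW v i) (prefixW f i) j) →
    (outcomeI u, v) ∉ L

/-- `f ⊑ f'` : in every round, the lookahead granted by `f'` is at least that granted by `f`. -/
def delayLE (f f' : ℕ → ℕ) : Prop :=
  ∀ i, (∑ j ∈ Finset.range (i + 1), f j) ≤ ∑ j ∈ Finset.range (i + 1), f' j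

end DelayGames
/-- The infinite word `(ab)^ω` over `Σ_I = {a, b}` modeled as `Bool` with `a = true`,
`b = false`; `abFrom n` is its suffix starting at position `n`, so `abFrom 0 = (ab)^ω`
and `abFrom 1 = (ba)^ω`. -/
def abFrom (n : ℕ) : ℕ → Bool := fun k => decide ((n + k) % 2 = 0)

/-- `L_1 = { (α, β) : α ≠ (ab)^ω }`. -/
def L1 : Set ((ℕ → Bool) × (ℕ → Bool)) := {p | p.1 ≠ abFrom 0}

lemma flatten_ofFn_blocks {α : Type*} (f : ℕ → ℕ) (g : ℕ → α) (u : ℕ → List α)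
    (hu : ∀ i, u i = List.ofFn fun j : Fin (f i) => g ((∑ k ∈ Finset.range i, f k) + j)) :
    ∀ i, (List.ofFn fun j : Fin (i + 1) => u j).flatten
      = List.ofFn fun j : Fin (∑ k ∈ Finset.range (i + 1), f k) => g (j : ℕ) := by
  intro i
  induction i with
  | zero =>
      simp [hu 0]
      rfl
  | succ n ih =>
      rw [List.ofFn_succ' (fun j : Fin (n+2) => u j)]
      simp only [List.concat_eq_append, List.flatten_append, List.flatten_cons,
        List.flatten_nil, List.append_nil, Fin.coe_castSucc, Fin.val_last]
      rw [ih, hu (n+1)]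
      have hsum : (∑ k ∈ Finset.range (n + 2), f k)
          = (∑ k ∈ Finset.range (n + 1), f k) + f (n+1) := Finset.sum_range_succ f (n+1)
      have h2 : List.ofFn (fun j : Fin ((∑ k ∈ Finset.range (n + 1), f k) + f (n+1)) => g (j : ℕ)) = _ := List.ofFn_add
      have h3 : (List.ofFn fun j : Fin (∑ k ∈ Finset.range (n + 2), f k) => g (j : ℕ))
          = List.ofFn fun j : Fin ((∑ k ∈ Finset.range (n + 1), f k) + f (n+1)) => g (j : ℕ) := by
        congr 1
        exact hsum ▸ HEq.rfl
      rw [h3, h2]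
      simp

/-- Player I has an omnipotent lookahead-counting strategy for `L_1`,
namely `τ(x, n) = (ab)^ω` for even `n` and `(ba)^ω` for odd `n`, but he has no
omnipotent output-tracking strategy for `L_1`. -/
theorem stmt18 :
    (∀ f : ℕ → ℕ, (∀ i, 0 < f i) → lcWinI f L1 (fun _ n => abFrom n)) ∧
    (∀ τ : List Bool → ℕ → Bool, ∃ f : ℕ → ℕ, (∀ i, 0 < f i) ∧
      ∃ (u : ℕ → List Bool) (v : ℕ → Bool),
        (∀ i, u i = List.ofFn fun j : Fin (f i) => τ (prefixW v i) j) ∧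
        (outcomeI u, v) ∈ L1) := by
  constructor
  · intro f hf u v hu hmem
    have hu' : ∀ i, u i = List.ofFn fun j : Fin (f i) =>
        abFrom 0 ((∑ k ∈ Finset.range i, f k) + j) := by
      intro i
      rw [hu i]
      congr 1
      funext j
      simp [abFrom]
    have hflat := flatten_ofFn_blocks f (abFrom 0) u hu'
    have hlen : ∀ n : ℕ, n < ∑ k ∈ Finset.range (n + 1), f k := by
      intro n
      have : n + 1 = ∑ k ∈ Finset.range (n + 1), 1 := by simp
      calc n < n + 1 := Nat.lt_succ_self n
        _ = ∑ k ∈ Finset.range (n + 1), 1 := this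
        _ ≤ ∑ k ∈ Finset.range (n + 1), f k :=
            Finset.sum_le_sum fun i _ => hf i
    have houtcome : outcomeI u = abFrom 0 := by
      funext n
      have hn : n < (List.ofFn fun j : Fin (∑ k ∈ Finset.range (n + 1), f k) =>
          abFrom 0 (j : ℕ)).length := by
        simpa using hlen n
      simp only [outcomeI, hflat n]
      rw [List.getD_eq_getElem _ _ hn, List.getElem_ofFn]
    exact hmem houtcome
  · intro τ
    set v : ℕ → Bool := fun _ => false with hv
    by_cases hb : τ (prefixW v 1) 0 = true
    · refine ⟨fun _ => 1, fun _ => one_pos,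
        (fun i => List.ofFn fun j : Fin 1 => τ (prefixW v i) j), v,
        fun i => rfl, ?_⟩
      intro heq
      have h1 : outcomeI (fun i => List.ofFn fun j : Fin 1 => τ (prefixW v i) j) 1
          = τ (prefixW v 1) 0 := rfl
      have := congrFun heq 1
      dsimp only at this
      rw [h1] at this
      rw [hb] at this
      simp [abFrom] at this
    · refine ⟨fun i => if i = 0 then 2 else 1, ?_,
        (fun i => List.ofFn fun j : Fin (if i = 0 then 2 else 1) => τ (prefixW v i) j), v,
        fun i => rfl, ?_⟩
      · intro i; by_cases h : i = 0 <;> simp [h]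
      · intro heq
        have h1 : outcomeI (fun i => List.ofFn
            fun j : Fin (if i = 0 then 2 else 1) => τ (prefixW v i) j) 2
            = τ (prefixW v 1) 0 := rfl
        have := congrFun heq 2
        dsimp only at this
        rw [h1] at this
        have hb' : τ (prefixW v 1) 0 = false := by
          cases h : τ (prefixW v 1) 0
          · rfl
          · exact absurd h hb
        rw [hb'] at this
        simp [abFrom] at this
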